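/- Let Re(s) > 0. Then there exists a constant d ∈ (0,∞) such that for every nonnegative measurable h on (a,a+1), ∫_a^{a+1} (x-a)^{2Re(s)-1} ( ∫_x^{a+1} (t-a)^{-Re(s)-1/2} h(t) dt )² dx ≤ d ∫_a^{a+1} h(x)² dx. -/

import Mathlib

open MeasureTheory Set Filter

private lemma meas_rpow (a r : ℝ) : Measurable fun t : ℝ => (t - a) ^ r := by
  fun_prop

/-- Integral of a shifted power over `Ioo c b`. -/
private lemma lint_rpow (a c b r : ℝ) (hc : a ≤ c) (hcb : c < b)
    (hr : -1 < r ∨ (a < c ∧ r ≠ -1)) :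
    ∫⁻ t in Ioo c b, ENNReal.ofReal ((t - a) ^ r) =
      ENNReal.ofReal (((b - a) ^ (r + 1) - (c - a) ^ (r + 1)) / (r + 1)) := by
  have hI : IntervalIntegrable (fun t => (t - a) ^ r) volume c b := by
    rcases hr with hr | ⟨hac, _⟩
    · have h1 := (intervalIntegral.intervalIntegrable_rpow' (a := c - a) (b := b - a)
        hr).comp_sub_right a
      rw [sub_add_cancel, sub_add_cancel] at h1
      exact h1
    · apply ContinuousOn.intervalIntegrable
      apply ContinuousOn.rpow_const (by fun_prop)
      intro t ht
      rw [uIcc_of_le hcb.le] at ht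
      exact Or.inl (sub_ne_zero.2 (ne_of_gt (lt_of_lt_of_le hac ht.1)))
  have hIoo : IntegrableOn (fun t => (t - a) ^ r) (Ioo c b) := hI.1.mono_set Ioo_subset_Ioc_self
  have hval : ∫ t in Ioo c b, (t - a) ^ r =
      ((b - a) ^ (r + 1) - (c - a) ^ (r + 1)) / (r + 1) := by
    rw [← integral_Ioc_eq_integral_Ioo, ← intervalIntegral.integral_of_le hcb.le,
      intervalIntegral.integral_comp_sub_right (fun u => u ^ r) a, integral_rpow]
    rcases hr with hr | ⟨hac, hne⟩
    · exact Or.inl hr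
    · refine Or.inr ⟨hne, ?_⟩
      rw [uIcc_of_le (by linarith)]
      intro h0
      have := h0.1
      linarith
  rw [← hval, ← ofReal_integral_eq_lintegral_ofReal hIoo]
  filter_upwards [ae_restrict_mem measurableSet_Ioo] with t ht
  exact Real.rpow_nonneg (by linarith [ht.1]) r

/-- Tonelli swap for the triangle `a < x < t < b`. -/
private lemma swap_lemma (a b : ℝ) (w F : ℝ → ENNReal) (hw : Measurable w) (hF : Measurable F) :
    ∫⁻ x in Ioo a b, w x * ∫⁻ t in Ioo x b, F t =
      ∫⁻ t in Ioo a b, F t * ∫⁻ x in Ioo a t, w x := by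
  have key : ∀ x ∈ Ioo a b, ∫⁻ t in Ioo x b, F t
      = ∫⁻ t in Ioo a b, (if x < t then F t else 0) := by
    intro x hx
    have : ∀ t, (if x < t then F t else 0) = (Ioi x).indicator F t := by
      intro t; simp [indicator_apply, mem_Ioi]
    simp_rw [this]
    have hset : Ioi x ∩ Ioo a b = Ioo x b := by
      ext t
      simp only [mem_inter_iff, mem_Ioi, mem_Ioo]
      exact ⟨fun ⟨h1, h2⟩ => ⟨h1, h2.2⟩, fun ⟨h1, h2⟩ => ⟨h1, lt_trans hx.1 h1, h2⟩⟩
    rw [lintegral_indicator measurableSet_Ioi, Measure.restrict_restrict measurableSet_Ioi, hset]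
  calc ∫⁻ x in Ioo a b, w x * ∫⁻ t in Ioo x b, F t
      = ∫⁻ x in Ioo a b, ∫⁻ t in Ioo a b, w x * (if x < t then F t else 0) := by
        refine setLIntegral_congr_fun measurableSet_Ioo (fun x hx => ?_)
        rw [key x hx, lintegral_const_mul]
        exact Measurable.ite measurableSet_Ioi hF measurable_const
    _ = ∫⁻ t in Ioo a b, ∫⁻ x in Ioo a b, w x * (if x < t then F t else 0) := by
        apply lintegral_lintegral_swap
        apply Measurable.aemeasurable
        exact (hw.comp measurable_fst).mul
          (Measurable.ite (measurableSet_lt measurable_fst measurable_snd)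
            (hF.comp measurable_snd) measurable_const)
    _ = ∫⁻ t in Ioo a b, F t * ∫⁻ x in Ioo a t, w x := by
        refine setLIntegral_congr_fun measurableSet_Ioo (fun t ht => ?_)
        have hpt : ∀ x, w x * (if x < t then F t else 0)
            = (Iio t).indicator (fun x => w x * F t) x := by
          intro x
          simp only [indicator_apply, mem_Iio, mul_ite, mul_zero]
        simp_rw [hpt]
        have hset2 : Iio t ∩ Ioo a b = Ioo a t := by
          ext x
          simp only [mem_inter_iff, mem_Iio, mem_Ioo]
          exact ⟨fun ⟨h1, h2⟩ => ⟨h2.1, h1⟩, fun ⟨h1, h2⟩ => ⟨h2, h1, lt_trans h2 ht.2⟩⟩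
        rw [lintegral_indicator measurableSet_Iio,
          Measure.restrict_restrict measurableSet_Iio, hset2, lintegral_mul_const _ hw,
          mul_comm]

/-- Two-weight Hardy inequality instance: for `Re(s) > 0` there is `d ∈ (0,∞)`
such that for all nonnegative measurable `h`,
`∫_a^{a+1} (x-a)^{2Re(s)-1} (∫_x^{a+1} (t-a)^{-Re(s)-1/2} h(t) dt)² dx
  ≤ d ∫_a^{a+1} h(x)² dx`. -/
theorem stmt13 (a : ℝ) (s : ℂ) (hs : 0 < s.re) :
    ∃ d : ℝ, 0 < d ∧
      ∀ h : ℝ → ℝ, Measurable h → (∀ x, 0 ≤ h x) →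
        ∫⁻ x in Ioo a (a + 1),
          ENNReal.ofReal ((x - a) ^ (2 * s.re - 1 : ℝ)) *
            (∫⁻ t in Ioo x (a + 1),
              ENNReal.ofReal ((t - a) ^ (-s.re - 1/2 : ℝ) * h t)) ^ 2 ≤
        ENNReal.ofReal d * ∫⁻ x in Ioo a (a + 1), ENNReal.ofReal (h x ^ 2) := by
  set σ := s.re with hσdef
  have hσ : 0 < σ := hs
  refine ⟨1 / (σ * σ), by positivity, fun h hm hpos => ?_⟩
  set W : ℝ → ENNReal := fun x => ENNReal.ofReal ((x - a) ^ (σ - 1) / σ) with hW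
  set F : ℝ → ENNReal := fun t => ENNReal.ofReal ((t - a) ^ (-σ) * h t ^ 2) with hF
  have hWm : Measurable W := ((meas_rpow a (σ - 1)).div_const σ).ennreal_ofReal
  have hFm : Measurable F := ((meas_rpow a (-σ)).mul (hm.pow_const 2)).ennreal_ofReal
  have hsq : ∀ A B : ENNReal, (A ^ ((1:ℝ)/2) * B ^ ((1:ℝ)/2)) ^ 2 = A * B := by
    intro A B
    rw [mul_pow]
    congr 1 <;>
      · rw [← ENNReal.rpow_natCast _ 2, ← ENNReal.rpow_mul]
        norm_num
  -- Step 1: pointwise Cauchy–Schwarz bound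
  have claim1 : ∀ x ∈ Ioo a (a + 1),
      (∫⁻ t in Ioo x (a + 1), ENNReal.ofReal ((t - a) ^ (-σ - 1/2 : ℝ) * h t)) ^ 2 ≤
        (∫⁻ t in Ioo x (a + 1), ENNReal.ofReal ((t - a) ^ (-1 - σ))) *
          ∫⁻ t in Ioo x (a + 1), F t := by
    intro x hx
    set f : ℝ → ENNReal := fun t => ENNReal.ofReal ((t - a) ^ ((-1 - σ)/2)) with hf
    set g : ℝ → ENNReal := fun t => ENNReal.ofReal ((t - a) ^ (-σ/2) * h t) with hg
    have hsplit : ∫⁻ t in Ioo x (a + 1), ENNReal.ofReal ((t - a) ^ (-σ - 1/2 : ℝ) * h t)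
        = ∫⁻ t in Ioo x (a + 1), (f * g) t := by
      refine setLIntegral_congr_fun measurableSet_Ioo (fun t ht => ?_)
      have ht0 : 0 < t - a := by have := hx.1; have := ht.1; linarith
      simp only [hf, hg, Pi.mul_apply]
      rw [← ENNReal.ofReal_mul (Real.rpow_nonneg ht0.le _), ← mul_assoc,
        ← Real.rpow_add ht0, show (-1 - σ)/2 + -σ/2 = -σ - 1/2 by ring]
    have hCS := ENNReal.lintegral_mul_le_Lp_mul_Lq (volume.restrict (Ioo x (a + 1)))
      (p := 2) (q := 2) ⟨by norm_num, by norm_num, by norm_num⟩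
      ((meas_rpow a ((-1 - σ)/2)).ennreal_ofReal.aemeasurable)
      (((meas_rpow a (-σ/2)).mul hm).ennreal_ofReal.aemeasurable)
    have hf2 : ∫⁻ t in Ioo x (a + 1), f t ^ (2:ℝ)
        = ∫⁻ t in Ioo x (a + 1), ENNReal.ofReal ((t - a) ^ (-1 - σ)) := by
      refine setLIntegral_congr_fun measurableSet_Ioo (fun t ht => ?_)
      have ht0 : 0 < t - a := by have := hx.1; have := ht.1; linarith
      simp only [hf]
      rw [ENNReal.ofReal_rpow_of_nonneg (Real.rpow_nonneg ht0.le _) (by norm_num),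
        ← Real.rpow_mul ht0.le, show (-1 - σ)/2 * 2 = -1 - σ by ring]
    have hg2 : ∫⁻ t in Ioo x (a + 1), g t ^ (2:ℝ) = ∫⁻ t in Ioo x (a + 1), F t := by
      refine setLIntegral_congr_fun measurableSet_Ioo (fun t ht => ?_)
      have ht0 : 0 < t - a := by have := hx.1; have := ht.1; linarith
      simp only [hg, hF]
      rw [ENNReal.ofReal_rpow_of_nonneg (mul_nonneg (Real.rpow_nonneg ht0.le _) (hpos t))
        (by norm_num),
        Real.mul_rpow (Real.rpow_nonneg ht0.le _) (hpos t),
        ← Real.rpow_mul ht0.le, show -σ/2 * 2 = -σ by ring, Real.rpow_two]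
    calc (∫⁻ t in Ioo x (a + 1), ENNReal.ofReal ((t - a) ^ (-σ - 1/2 : ℝ) * h t)) ^ 2
        = (∫⁻ t in Ioo x (a + 1), (f * g) t) ^ 2 := by rw [hsplit]
      _ ≤ ((∫⁻ t in Ioo x (a + 1), f t ^ (2:ℝ)) ^ ((1:ℝ)/2) *
            (∫⁻ t in Ioo x (a + 1), g t ^ (2:ℝ)) ^ ((1:ℝ)/2)) ^ 2 :=
          pow_le_pow_left' hCS 2
      _ = (∫⁻ t in Ioo x (a + 1), f t ^ (2:ℝ)) * ∫⁻ t in Ioo x (a + 1), g t ^ (2:ℝ) :=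
          hsq _ _
      _ = _ := by rw [hf2, hg2]
  -- Step 2: the weight bound
  have claim2 : ∀ x ∈ Ioo a (a + 1),
      ENNReal.ofReal ((x - a) ^ (2 * σ - 1 : ℝ)) *
        (∫⁻ t in Ioo x (a + 1), ENNReal.ofReal ((t - a) ^ (-1 - σ))) ≤ W x := by
    intro x hx
    have hx0 : 0 < x - a := by have := hx.1; linarith
    have hJ : ∫⁻ t in Ioo x (a + 1), ENNReal.ofReal ((t - a) ^ (-1 - σ))
        = ENNReal.ofReal ((1 - (x - a) ^ (-σ)) / (-σ)) := by
      rw [lint_rpow a x (a + 1) (-1 - σ) hx.1.le hx.2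
        (Or.inr ⟨hx.1, by intro hc; linarith⟩),
        show a + 1 - a = (1:ℝ) by ring, show -1 - σ + 1 = -σ by ring, Real.one_rpow]
    rw [hJ, ← ENNReal.ofReal_mul (Real.rpow_nonneg hx0.le _)]
    apply ENNReal.ofReal_le_ofReal
    have h1 : (1 - (x - a) ^ (-σ)) / (-σ) = ((x - a) ^ (-σ) - 1) / σ := by
      rw [div_neg, ← neg_div, neg_sub]
    rw [h1]
    calc (x - a) ^ (2 * σ - 1) * (((x - a) ^ (-σ) - 1) / σ)
        ≤ (x - a) ^ (2 * σ - 1) * ((x - a) ^ (-σ) / σ) := by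
          refine mul_le_mul_of_nonneg_left ?_ (Real.rpow_nonneg hx0.le _)
          exact (div_le_div_iff_of_pos_right hσ).mpr (by linarith)
      _ = (x - a) ^ (σ - 1) / σ := by
          rw [mul_div_assoc', ← Real.rpow_add hx0, show 2*σ - 1 + -σ = σ - 1 by ring]
  -- combine and swap
  calc ∫⁻ x in Ioo a (a + 1),
        ENNReal.ofReal ((x - a) ^ (2 * σ - 1 : ℝ)) *
          (∫⁻ t in Ioo x (a + 1), ENNReal.ofReal ((t - a) ^ (-σ - 1/2 : ℝ) * h t)) ^ 2
      ≤ ∫⁻ x in Ioo a (a + 1), W x * ∫⁻ t in Ioo x (a + 1), F t := by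
        apply lintegral_mono_ae
        filter_upwards [ae_restrict_mem measurableSet_Ioo] with x hx
        calc ENNReal.ofReal ((x - a) ^ (2 * σ - 1 : ℝ)) *
              (∫⁻ t in Ioo x (a + 1), ENNReal.ofReal ((t - a) ^ (-σ - 1/2 : ℝ) * h t)) ^ 2
            ≤ ENNReal.ofReal ((x - a) ^ (2 * σ - 1 : ℝ)) *
                ((∫⁻ t in Ioo x (a + 1), ENNReal.ofReal ((t - a) ^ (-1 - σ))) *
                  ∫⁻ t in Ioo x (a + 1), F t) := mul_le_mul_right (claim1 x hx) _
          _ = (ENNReal.ofReal ((x - a) ^ (2 * σ - 1 : ℝ)) *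
                (∫⁻ t in Ioo x (a + 1), ENNReal.ofReal ((t - a) ^ (-1 - σ)))) *
                  ∫⁻ t in Ioo x (a + 1), F t := by rw [mul_assoc]
          _ ≤ W x * ∫⁻ t in Ioo x (a + 1), F t := mul_le_mul_left (claim2 x hx) _
    _ = ∫⁻ t in Ioo a (a + 1), F t * ∫⁻ x in Ioo a t, W x :=
        swap_lemma a (a + 1) W F hWm hFm
    _ = ∫⁻ t in Ioo a (a + 1), ENNReal.ofReal (1 / (σ * σ)) * ENNReal.ofReal (h t ^ 2) := by
        refine setLIntegral_congr_fun measurableSet_Ioo (fun t ht => ?_)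
        have ht0 : 0 < t - a := by have := ht.1; linarith
        have hWint : ∫⁻ x in Ioo a t, W x = ENNReal.ofReal ((t - a) ^ σ / (σ * σ)) := by
          have hptw : ∫⁻ x in Ioo a t, W x
              = ∫⁻ x in Ioo a t, ENNReal.ofReal (1 / σ) *
                  ENNReal.ofReal ((x - a) ^ (σ - 1)) := by
            refine setLIntegral_congr_fun measurableSet_Ioo (fun y hy => ?_)
            rw [hW, ← ENNReal.ofReal_mul (by positivity)]
            congr 1
            ring
          rw [hptw, lintegral_const_mul _ (meas_rpow a (σ - 1)).ennreal_ofReal,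
            lint_rpow a a t (σ - 1) le_rfl ht.1 (Or.inl (by linarith)),
            ← ENNReal.ofReal_mul (by positivity)]
          congr 1
          rw [sub_self, show σ - 1 + 1 = σ by ring, Real.zero_rpow hσ.ne', sub_zero]
          field_simp
        rw [hWint, hF, ← ENNReal.ofReal_mul (by positivity),
          ← ENNReal.ofReal_mul (by positivity)]
        congr 1
        have : (t - a) ^ (-σ) * (t - a) ^ σ = 1 := by
          rw [← Real.rpow_add ht0]
          norm_num
        calc (t - a) ^ (-σ) * h t ^ 2 * ((t - a) ^ σ / (σ * σ))
            = ((t - a) ^ (-σ) * (t - a) ^ σ) * h t ^ 2 / (σ * σ) := by ring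
          _ = 1 / (σ * σ) * h t ^ 2 := by rw [this]; ring
    _ = ENNReal.ofReal (1 / (σ * σ)) * ∫⁻ x in Ioo a (a + 1), ENNReal.ofReal (h x ^ 2) :=
        lintegral_const_mul _ (hm.pow_const 2).ennreal_ofReal
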